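/- Let f(x') = h₁(x') − h₂(x') = ∑_{j=1}^{n−1}(λ_j/2)x_j² + g(x') on |x'| ≤ R₀, where λ_j > 0 and |g(x')| ≤ C|x'|³, g odd modulo O(|x'|⁴)—precisely g(x') = p₃(x') + O(|x'|⁴) with p₃ a homogeneous polynomial of degree 3. Then ∫_{ε^γ < |x'| < R₀} (1/f(x') − 1/q(x')) dx' = C̃ + O(ε^{(n−1)γ}) as ε → 0, where q(x') = ∑_j (λ_j/2)x_j², C̃ is a constant independent of ε, n ∈ {2,3}, and the domain is the symmetric annulus. -/

import Mathlib

set_option maxHeartbeats 1000000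

open MeasureTheory Metric

private lemma odd_setIntegral {d : ℕ} (s : Set (EuclideanSpace ℝ (Fin d)))
    (hs : MeasurableSet s) (hsym : ∀ x, x ∈ s ↔ -x ∈ s)
    (φ : EuclideanSpace ℝ (Fin d) → ℝ) (hodd : ∀ x, φ (-x) = -φ x) :
    ∫ x in s, φ x = 0 := by
  have h1 : ∫ x in s, φ x = ∫ x, s.indicator φ x := (integral_indicator hs).symm
  have h2 : ∀ x, s.indicator φ (-x) = - s.indicator φ x := by
    intro x
    by_cases hx : x ∈ s
    · rw [Set.indicator_of_mem ((hsym x).mp hx), Set.indicator_of_mem hx, hodd]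
    · rw [Set.indicator_of_notMem (fun h => hx ((hsym x).mpr h)),
        Set.indicator_of_notMem hx, neg_zero]
  have h3 : ∫ x, s.indicator φ x = - ∫ x, s.indicator φ x := by
    conv_lhs => rw [← integral_neg_eq_self (s.indicator φ) volume]
    simp_rw [h2]
    rw [integral_neg]
  rw [h1]; linarith [h3]

private lemma frac_identity (a b p : ℝ) (ha : a ≠ 0) (hb : b ≠ 0) :
    1/a - 1/b + p/b^2 = p*(a-b)/(a*b^2) - (a - b - p)/(a*b) := by
  field_simp
  ring

private lemma G_bound_small (κ cl C t F Q P : ℝ) (hκ : 0 < κ) (hcl : 0 < cl) (hC : 0 < C)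
    (ht0 : 0 < t) (hts : t ≤ 1) (hF : κ/4 * t^2 ≤ F) (hQ : cl * t^2 ≤ Q)
    (hP : |P| ≤ C * t^3) (hR : |F - Q - P| ≤ C * t^4) :
    |1/F - 1/Q + P/Q^2| ≤ 8*C^2/(κ*cl^2) + 4*C/(κ*cl) := by
  have hFpos : 0 < F := lt_of_lt_of_le (by positivity) hF
  have hQpos : 0 < Q := lt_of_lt_of_le (by positivity) hQ
  have hfq : |F - Q| ≤ 2 * C * t^3 := by
    have h1 : |F - Q| ≤ |F - Q - P| + |P| := by
      have := abs_add_le (F - Q - P) P; simpa using this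
    have h2 : C * t^4 ≤ C * t^3 := by
      nlinarith [mul_nonneg (mul_pos hC (pow_pos ht0 3)).le (sub_nonneg.2 hts)]
    linarith
  have hid : 1/F - 1/Q + P/Q^2 = P*(F-Q)/(F*Q^2) - (F - Q - P)/(F*Q) :=
    frac_identity F Q P hFpos.ne' hQpos.ne'
  have hden1 : 0 < F * Q^2 := by positivity
  have hden2 : 0 < F * Q := by positivity
  have h1 : |P*(F-Q)/(F*Q^2)| ≤ 8*C^2/(κ*cl^2) := by
    rw [abs_div, abs_of_pos hden1]
    have hnum : |P*(F-Q)| ≤ (C * t^3) * (2 * C * t^3) := by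
      rw [abs_mul]
      exact mul_le_mul hP hfq (abs_nonneg _) (by positivity)
    have hq2 : (cl * t^2)^2 ≤ Q^2 := pow_le_pow_left₀ (by positivity) hQ 2
    have hdlo : (κ/4 * t^2) * (cl * t^2)^2 ≤ F * Q^2 :=
      mul_le_mul hF hq2 (by positivity) hFpos.le
    calc |P*(F-Q)| / (F*Q^2)
        ≤ ((C * t^3) * (2 * C * t^3)) / ((κ/4 * t^2) * (cl * t^2)^2) :=
          div_le_div₀ (by positivity) hnum (by positivity) hdlo
      _ = 8*C^2/(κ*cl^2) := by
          rw [div_eq_div_iff (by positivity) (by positivity)]; ring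
  have h2 : |(F - Q - P)/(F*Q)| ≤ 4*C/(κ*cl) := by
    rw [abs_div, abs_of_pos hden2]
    have hdlo : (κ/4 * t^2) * (cl * t^2) ≤ F * Q :=
      mul_le_mul hF hQ (by positivity) hFpos.le
    calc |F - Q - P| / (F*Q)
        ≤ (C * t^4) / ((κ/4 * t^2) * (cl * t^2)) :=
          div_le_div₀ (by positivity) hR (by positivity) hdlo
      _ = 4*C/(κ*cl) := by
          rw [div_eq_div_iff (by positivity) (by positivity)]; ring
  calc |1/F - 1/Q + P/Q^2| = |P*(F-Q)/(F*Q^2) - (F - Q - P)/(F*Q)| := by rw [hid]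
    _ ≤ |P*(F-Q)/(F*Q^2)| + |(F - Q - P)/(F*Q)| := abs_sub _ _
    _ ≤ 8*C^2/(κ*cl^2) + 4*C/(κ*cl) := add_le_add h1 h2

private lemma G_bound_large (κ cl C t F Q P : ℝ) (hκ : 0 < κ) (hcl : 0 < cl) (hC : 0 < C)
    (ht1 : 1 ≤ t) (hF : κ/4 * t^2 ≤ F) (hQ : cl * t^2 ≤ Q) (hP : |P| ≤ C * t^3) :
    |1/F - 1/Q + P/Q^2| ≤ 4/κ + 1/cl + C/cl^2 := by
  have ht0 : 0 < t := lt_of_lt_of_le zero_lt_one ht1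
  have hFpos : 0 < F := lt_of_lt_of_le (by positivity) hF
  have hQpos : 0 < Q := lt_of_lt_of_le (by positivity) hQ
  have ht2 : (1:ℝ) ≤ t^2 := by nlinarith
  have h1 : |1/F| ≤ 4/κ := by
    rw [abs_of_pos (by positivity), div_le_div_iff₀ hFpos (by positivity)]
    nlinarith [mul_le_mul_of_nonneg_left ht2 hκ.le]
  have h2 : |1/Q| ≤ 1/cl := by
    rw [abs_of_pos (by positivity), div_le_div_iff₀ hQpos hcl]
    nlinarith [mul_le_mul_of_nonneg_left ht2 hcl.le]
  have h3 : |P/Q^2| ≤ C/cl^2 := by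
    rw [abs_div, abs_of_pos (by positivity : (0:ℝ) < Q^2),
      div_le_div_iff₀ (by positivity) (by positivity)]
    have hq2 : (cl * t^2)^2 ≤ Q^2 := pow_le_pow_left₀ (by positivity) hQ 2
    calc |P| * cl^2 ≤ (C * t^3) * cl^2 := mul_le_mul_of_nonneg_right hP (by positivity)
      _ ≤ C * ((cl*t^2)^2) := by
          nlinarith [mul_nonneg (mul_nonneg hC.le (pow_nonneg ht0.le 3))
            (mul_nonneg (mul_pos hcl hcl).le (sub_nonneg.2 ht1))]
      _ ≤ C * Q^2 := mul_le_mul_of_nonneg_left hq2 hC.le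
  calc |1/F - 1/Q + P/Q^2| ≤ |1/F - 1/Q| + |P/Q^2| := abs_add_le _ _
    _ ≤ (|1/F| + |1/Q|) + |P/Q^2| := by
        have := abs_sub (1/F) (1/Q); linarith
    _ ≤ 4/κ + 1/cl + C/cl^2 := by linarith

theorem stmt_16 (n : ℕ) (hn : n = 2 ∨ n = 3) (R0 κ : ℝ) (hR0 : 0 < R0) (hκ : 0 < κ)
    (lam : Fin (n-1) → ℝ) (hlam : ∀ j, 0 < lam j)
    (f p3 : EuclideanSpace ℝ (Fin (n-1)) → ℝ) (C : ℝ) (hC : 0 < C)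
    (hf_cont : Continuous f) (hp3_cont : Continuous p3)
    (hp3_odd : ∀ x, p3 (-x) = - p3 x)
    (hp3_bound : ∀ x, |p3 x| ≤ C * ‖x‖ ^ 3)
    (hrem : ∀ x, ‖x‖ ≤ R0 →
      |f x - (∑ j, (lam j / 2) * (x j) ^ 2) - p3 x| ≤ C * ‖x‖ ^ 4)
    (hf_low : ∀ x, ‖x‖ ≤ R0 → κ/4 * ‖x‖ ^ 2 ≤ f x)
    (γ : ℝ) (hγ0 : 0 < γ) (hγ : γ ≤ 1/4) :
    ∃ Ctil C' : ℝ, 0 < C' ∧ ∀ ε : ℝ, 0 < ε → ε < 1 →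
      |(∫ x in {x : EuclideanSpace ℝ (Fin (n-1)) | ε ^ γ < ‖x‖ ∧ ‖x‖ < R0},
          (1 / f x - 1 / (∑ j, (lam j / 2) * (x j) ^ 2))) - Ctil| ≤
        C' * ε ^ (((n:ℝ) - 1) * γ) := by
  have hd : 0 < n - 1 := by rcases hn with rfl | rfl <;> norm_num
  haveI : Nonempty (Fin (n-1)) := ⟨⟨0, hd⟩⟩
  set q : EuclideanSpace ℝ (Fin (n-1)) → ℝ := fun x => ∑ j, (lam j / 2) * (x j) ^ 2
    with hq_def
  have hnormsq : ∀ x : EuclideanSpace ℝ (Fin (n-1)), ∑ j, (x j) ^ 2 = ‖x‖ ^ 2 := by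
    intro x
    rw [EuclideanSpace.norm_eq, Real.sq_sqrt (by positivity)]
    simp [sq_abs]
  set lmin := Finset.univ.inf' Finset.univ_nonempty lam with hlmin_def
  have hlmin : 0 < lmin := by
    rw [hlmin_def, Finset.lt_inf'_iff]
    exact fun j _ => hlam j
  set cl : ℝ := lmin / 2 with hcl_def
  have hcl : 0 < cl := by positivity
  have hq_low : ∀ x : EuclideanSpace ℝ (Fin (n-1)), cl * ‖x‖ ^ 2 ≤ q x := by
    intro x
    rw [← hnormsq, Finset.mul_sum, hq_def]
    apply Finset.sum_le_sum
    intro j _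
    have h1 : lmin ≤ lam j := Finset.inf'_le lam (Finset.mem_univ j)
    nlinarith [sq_nonneg (x j)]
  have hq_pos : ∀ x : EuclideanSpace ℝ (Fin (n-1)), 0 < ‖x‖ → 0 < q x := fun x hx =>
    lt_of_lt_of_le (by positivity) (hq_low x)
  have hf_pos : ∀ x : EuclideanSpace ℝ (Fin (n-1)), 0 < ‖x‖ → ‖x‖ ≤ R0 → 0 < f x :=
    fun x hx hxR => lt_of_lt_of_le (by positivity) (hf_low x hxR)
  -- the annuli
  set S : ℝ → Set (EuclideanSpace ℝ (Fin (n-1))) :=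
    fun a => {x : EuclideanSpace ℝ (Fin (n-1)) | a < ‖x‖ ∧ ‖x‖ < R0} with hS_def
  have hS_meas : ∀ a, MeasurableSet (S a) := by
    intro a
    have : S a = {x : EuclideanSpace ℝ (Fin (n-1)) | a < ‖x‖}
        ∩ {x : EuclideanSpace ℝ (Fin (n-1)) | ‖x‖ < R0} := rfl
    rw [this]
    exact ((isOpen_lt continuous_const continuous_norm).inter
      (isOpen_lt continuous_norm continuous_const)).measurableSet
  have hS_sub_ball : ∀ a, S a ⊆ ball (0 : EuclideanSpace ℝ (Fin (n-1))) R0 := by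
    intro a x hx
    exact mem_ball_zero_iff.mpr hx.2
  have hS0 : ∀ a, 0 ≤ a → S a ⊆ S 0 := by
    intro a ha x hx
    exact ⟨lt_of_le_of_lt ha hx.1, hx.2⟩
  have hq_cont : Continuous q := by
    rw [hq_def]
    exact continuous_finset_sum _ fun j _ =>
      (continuous_const.mul (((EuclideanSpace.proj j).continuous).pow 2))
  -- the regularized integrand
  set G : EuclideanSpace ℝ (Fin (n-1)) → ℝ :=
    fun x => 1 / f x - 1 / q x + p3 x / (q x) ^ 2 with hG_def
  have hG_cont : ContinuousOn G (S 0) := by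
    have hfne : ∀ x ∈ S 0, f x ≠ 0 := fun x hx => (hf_pos x hx.1 hx.2.le).ne'
    have hqne : ∀ x ∈ S 0, q x ≠ 0 := fun x hx => (hq_pos x hx.1).ne'
    apply ContinuousOn.add
    · exact (continuousOn_const.div hf_cont.continuousOn hfne).sub
        (continuousOn_const.div hq_cont.continuousOn hqne)
    · exact hp3_cont.continuousOn.div (hq_cont.pow 2).continuousOn
        (fun x hx => pow_ne_zero 2 (hqne x hx))
  -- integrability helper
  have hIntOn : ∀ (g : EuclideanSpace ℝ (Fin (n-1)) → ℝ)
      (A : Set (EuclideanSpace ℝ (Fin (n-1)))) (K : ℝ), MeasurableSet A →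
      A ⊆ ball (0 : EuclideanSpace ℝ (Fin (n-1))) R0 →
      ContinuousOn g A → (∀ x ∈ A, |g x| ≤ K) → IntegrableOn g A := by
    intro g A K hA hsub hcont hbd
    have hfin : volume A < ⊤ := lt_of_le_of_lt (measure_mono hsub) measure_ball_lt_top
    refine Integrable.mono'
      ((integrableOn_const hfin.ne) : IntegrableOn (fun _ => K) A volume)
      (hcont.aestronglyMeasurable hA) ?_
    filter_upwards [ae_restrict_mem hA] with x hx
    simpa [Real.norm_eq_abs] using hbd x hx
  -- boundedness of G on S 0
  set M : ℝ := (8*C^2/(κ*cl^2) + 4*C/(κ*cl)) + (4/κ + 1/cl + C/cl^2) with hM_def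
  have hM : 0 < M := by positivity
  have hG_bd : ∀ x ∈ S 0, |G x| ≤ M := by
    intro x hx
    have ht0 : 0 < ‖x‖ := hx.1
    have htR : ‖x‖ < R0 := hx.2
    have hGx : G x = 1 / f x - 1 / q x + p3 x / (q x) ^ 2 := rfl
    rw [hGx]
    by_cases hts : ‖x‖ ≤ 1
    · have h := G_bound_small κ cl C ‖x‖ (f x) (q x) (p3 x) hκ hcl hC ht0 hts
        (hf_low x htR.le) (hq_low x) (hp3_bound x) (hrem x htR.le)
      have hpos : (0:ℝ) ≤ 4/κ + 1/cl + C/cl^2 := by positivity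
      rw [hM_def]; linarith
    · push_neg at hts
      have h := G_bound_large κ cl C ‖x‖ (f x) (q x) (p3 x) hκ hcl hC hts.le
        (hf_low x htR.le) (hq_low x) (hp3_bound x)
      have hpos : (0:ℝ) ≤ 8*C^2/(κ*cl^2) + 4*C/(κ*cl) := by positivity
      rw [hM_def]; linarith
  -- G integrable on measurable subsets of S 0
  have hG_int : ∀ (A : Set (EuclideanSpace ℝ (Fin (n-1)))), MeasurableSet A →
      A ⊆ S 0 → IntegrableOn G A := by
    intro A hA hsub
    exact hIntOn G A M hA (subset_trans hsub (hS_sub_ball 0)) (hG_cont.mono hsub)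
      (fun x hx => hG_bd x (hsub hx))
  -- the odd part
  set φ : EuclideanSpace ℝ (Fin (n-1)) → ℝ := fun x => p3 x / (q x) ^ 2 with hφ_def
  have hq_even : ∀ x : EuclideanSpace ℝ (Fin (n-1)), q (-x) = q x := by
    intro x
    rw [hq_def]
    refine Finset.sum_congr rfl fun j _ => ?_
    have : (-x) j = -(x j) := rfl
    rw [this, neg_sq]
  have hφ_odd : ∀ x : EuclideanSpace ℝ (Fin (n-1)), φ (-x) = -φ x := by
    intro x
    have h1 : φ (-x) = p3 (-x) / (q (-x))^2 := rfl
    rw [h1, hp3_odd, hq_even, neg_div]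
  have hφ_zero : ∀ a : ℝ, ∫ x in S a, φ x = 0 := by
    intro a
    refine odd_setIntegral (S a) (hS_meas a) ?_ φ hφ_odd
    intro x
    have hmem : ∀ y : EuclideanSpace ℝ (Fin (n-1)), y ∈ S a ↔ (a < ‖y‖ ∧ ‖y‖ < R0) :=
      fun y => Iff.rfl
    rw [hmem, hmem, norm_neg]
  have hφ_int : ∀ a : ℝ, 0 < a → IntegrableOn φ (S a) := by
    intro a ha
    refine hIntOn φ (S a) (C * R0^3 / (cl * a^2)^2) (hS_meas a) (hS_sub_ball a) ?_ ?_
    · refine hp3_cont.continuousOn.div (hq_cont.pow 2).continuousOn ?_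
      intro x hx
      exact pow_ne_zero 2 (hq_pos x (lt_trans ha hx.1)).ne'
    · intro x hx
      have hx0 : a < ‖x‖ := hx.1
      have hq1 : cl * a^2 ≤ q x := by
        refine le_trans ?_ (hq_low x)
        exact mul_le_mul_of_nonneg_left
          (pow_le_pow_left₀ ha.le hx.1.le 2) hcl.le
      have hq1pos : 0 < cl * a^2 := by positivity
      have hqpos : 0 < q x := lt_of_lt_of_le hq1pos hq1
      have hφx : φ x = p3 x / (q x)^2 := rfl
      rw [hφx, abs_div, abs_of_pos (by positivity : (0:ℝ) < (q x)^2)]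
      refine div_le_div₀ (by positivity) ?_ (by positivity)
        (pow_le_pow_left₀ hq1pos.le hq1 2)
      calc |p3 x| ≤ C * ‖x‖^3 := hp3_bound x
        _ ≤ C * R0^3 := by
            have : ‖x‖^3 ≤ R0^3 := pow_le_pow_left₀ (norm_nonneg x) hx.2.le 3
            nlinarith
  -- conclusion
  set v : ℝ := (volume (ball (0 : EuclideanSpace ℝ (Fin (n-1))) 1)).toReal with hv_def
  have hv : 0 ≤ v := ENNReal.toReal_nonneg
  refine ⟨∫ x in S 0, G x, M * v + 1, by positivity, ?_⟩
  intro ε hε hε1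
  set a : ℝ := ε ^ γ with ha_def
  have ha : 0 < a := Real.rpow_pos_of_pos hε γ
  set T : Set (EuclideanSpace ℝ (Fin (n-1))) :=
    {x : EuclideanSpace ℝ (Fin (n-1)) | 0 < ‖x‖ ∧ ‖x‖ ≤ a ∧ ‖x‖ < R0} with hT_def
  have hT_meas : MeasurableSet T := by
    have : T = ({x : EuclideanSpace ℝ (Fin (n-1)) | 0 < ‖x‖}
        ∩ {x : EuclideanSpace ℝ (Fin (n-1)) | ‖x‖ ≤ a})
        ∩ {x : EuclideanSpace ℝ (Fin (n-1)) | ‖x‖ < R0} := by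
      ext x; simp only [hT_def, Set.mem_setOf_eq, Set.mem_inter_iff]; tauto
    rw [this]
    exact (((isOpen_lt continuous_const continuous_norm).measurableSet).inter
      ((isClosed_le continuous_norm continuous_const).measurableSet)).inter
      ((isOpen_lt continuous_norm continuous_const).measurableSet)
  have hT_sub : T ⊆ S 0 := fun x hx => ⟨hx.1, hx.2.2⟩
  have hsplit : S 0 = S a ∪ T := by
    ext x
    simp only [hS_def, hT_def, Set.mem_setOf_eq, Set.mem_union]
    constructor
    · rintro ⟨h1, h2⟩
      rcases le_or_gt ‖x‖ a with h | h
      · exact Or.inr ⟨h1, h, h2⟩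
      · exact Or.inl ⟨h, h2⟩
    · rintro (⟨h1, h2⟩ | ⟨h1, h2, h3⟩)
      · exact ⟨lt_trans ha h1, h2⟩
      · exact ⟨h1, h3⟩
  have hdisj : Disjoint (S a) T :=
    Set.disjoint_left.mpr (fun x hx hx' => absurd hx.1 (not_lt.mpr hx'.2.1))
  have hGSa : IntegrableOn G (S a) := hG_int (S a) (hS_meas a) (hS0 a ha.le)
  have hGT : IntegrableOn G T := hG_int T hT_meas hT_sub
  have hsum : ∫ x in S 0, G x = (∫ x in S a, G x) + ∫ x in T, G x := by
    rw [hsplit]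
    exact setIntegral_union hdisj hT_meas hGSa hGT
  have hint_eq : ∫ x in S a, (1 / f x - 1 / q x) = ∫ x in S a, G x := by
    have hfun : (fun x => 1 / f x - 1 / q x) = fun x => G x - φ x := by
      funext x
      have h1 : G x = 1 / f x - 1 / q x + p3 x / (q x)^2 := rfl
      have h2 : φ x = p3 x / (q x)^2 := rfl
      rw [h1, h2]; ring
    rw [hfun, integral_sub hGSa (hφ_int a ha), hφ_zero a, sub_zero]
  have hseteq : {x : EuclideanSpace ℝ (Fin (n-1)) | ε ^ γ < ‖x‖ ∧ ‖x‖ < R0} = S a := rfl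
  rw [hseteq]
  have hintg : (∫ x in S a, (1 / f x - 1 / (∑ j, (lam j / 2) * (x j) ^ 2)))
      = ∫ x in S a, (1 / f x - 1 / q x) := rfl
  rw [hintg, hint_eq]
  have hdiff : (∫ x in S a, G x) - ∫ x in S 0, G x = -(∫ x in T, G x) := by
    rw [hsum]; ring
  rw [hdiff, abs_neg]
  -- bound the remainder integral
  have hTfin : volume T < ⊤ :=
    lt_of_le_of_lt (measure_mono (hT_sub.trans (hS_sub_ball 0))) measure_ball_lt_top
  have hbd : |∫ x in T, G x| ≤ M * (volume T).toReal := by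
    have := norm_setIntegral_le_of_norm_le_const_ae' (f := G) (s := T) (μ := volume)
      hTfin (Filter.Eventually.of_forall (fun x hx => by
        simpa [Real.norm_eq_abs] using hG_bd x (hT_sub hx)))
    simpa [Real.norm_eq_abs, Measure.real] using this
  have hvol : (volume T).toReal ≤ a ^ (n-1) * v := by
    have h1 : T ⊆ closedBall (0 : EuclideanSpace ℝ (Fin (n-1))) a :=
      fun x hx => mem_closedBall_zero_iff.mpr hx.2.1
    have h2 : volume T ≤ volume (closedBall (0 : EuclideanSpace ℝ (Fin (n-1))) a) :=
      measure_mono h1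
    rw [Measure.addHaar_closedBall _ _ ha.le, finrank_euclideanSpace_fin] at h2
    have h3 := ENNReal.toReal_mono (by
      exact ENNReal.mul_ne_top ENNReal.ofReal_ne_top measure_ball_lt_top.ne) h2
    rwa [ENNReal.toReal_mul, ENNReal.toReal_ofReal (by positivity)] at h3
  have hcast : ((n:ℝ) - 1) = ((n-1 : ℕ) : ℝ) := by
    rcases hn with rfl | rfl <;> norm_num
  have hpow : ε ^ (((n:ℝ) - 1) * γ) = a ^ (n-1) := by
    rw [hcast, mul_comm, Real.rpow_mul hε.le, Real.rpow_natCast, ha_def]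
  have hapow : 0 ≤ a ^ (n-1) := by positivity
  calc |∫ x in T, G x| ≤ M * (volume T).toReal := hbd
    _ ≤ M * (a ^ (n-1) * v) := by
        exact mul_le_mul_of_nonneg_left hvol hM.le
    _ ≤ (M * v + 1) * (a ^ (n-1)) := by nlinarith
    _ = (M * v + 1) * ε ^ (((n:ℝ) - 1) * γ) := by rw [hpow]
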